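/- arXiv:1806.07387 — 2 statements merged into one kernel-verified Lean document; each statement's English description precedes it below -/
import Mathlib

section
/- Let β > 0 and μ > 1. The convolution map (f,g) ↦ (2π)^{-1/2} f ∗ g is a continuous bilinear map from E_{(β,μ)} × E_{(β,μ)} to E_{(β,μ)}: there exists C > 0 such that ‖(2π)^{-1/2} f ∗ g‖_{(β,μ)} ≤ C ‖f‖_{(β,μ)} ‖g‖_{(β,μ)} for all f, g ∈ E_{(β,μ)}. -/
open MeasureTheory Real Complex
open scoped Convolution

/-- The weight used to define the norm of `E_{(β,μ)}`. -/
noncomputable def Eweight (β μ : ℝ) (h : ℝ → ℂ) (m : ℝ) : ℝ :=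
  (1 + |m|) ^ μ * Real.exp (β * |m|) * ‖h m‖

/-- Membership in the space `E_{(β,μ)}`. -/
def MemE (β μ : ℝ) (h : ℝ → ℂ) : Prop :=
  Continuous h ∧ BddAbove (Set.range (Eweight β μ h))

/-- The norm `‖h‖_{(β,μ)}`. -/
noncomputable def Enorm (β μ : ℝ) (h : ℝ → ℂ) : ℝ :=
  ⨆ m : ℝ, Eweight β μ h m

noncomputable def Wfun (β μ m : ℝ) : ℝ := (1 + |m|) ^ μ * Real.exp (β * |m|)

lemma Eweight_eq (β μ : ℝ) (h : ℝ → ℂ) (m : ℝ) :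
    Eweight β μ h m = Wfun β μ m * ‖h m‖ := by
  simp [Eweight, Wfun]

lemma Wfun_pos (β μ m : ℝ) : 0 < Wfun β μ m := by
  have h1 : (0:ℝ) < 1 + |m| := by positivity
  unfold Wfun; positivity

lemma one_le_Wfun {β μ : ℝ} (hβ : 0 ≤ β) (hμ : 0 ≤ μ) (m : ℝ) : 1 ≤ Wfun β μ m := by
  have h1 : (1:ℝ) ≤ (1 + |m|) ^ μ :=
    Real.one_le_rpow (by simpa using abs_nonneg m) hμ
  have h2 : (1:ℝ) ≤ Real.exp (β * |m|) :=
    Real.one_le_exp (by positivity)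
  unfold Wfun; nlinarith

lemma Wfun_key {β μ : ℝ} (hβ : 0 ≤ β) (hμ : 0 ≤ μ) (m t : ℝ) :
    Wfun β μ m ≤ 2 ^ μ * ((1 + |t|) ^ (-μ) + (1 + |m - t|) ^ (-μ)) *
      (Wfun β μ (m - t) * Wfun β μ t) := by
  have habs : |m| ≤ |m - t| + |t| := by
    calc |m| = |(m - t) + t| := by ring_nf
    _ ≤ |m - t| + |t| := abs_add_le _ _
  set a : ℝ := 1 + |m - t| with ha'
  set b : ℝ := 1 + |t| with hb'
  have ha : (0:ℝ) < a := by positivity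
  have hb : (0:ℝ) < b := by positivity
  have hexp : Real.exp (β * |m|) ≤ Real.exp (β * |m - t|) * Real.exp (β * |t|) := by
    rw [← Real.exp_add]
    exact Real.exp_le_exp.mpr (by nlinarith)
  have hpoly : (1 + |m|) ^ μ ≤ 2 ^ μ * (a ^ μ + b ^ μ) := by
    have haμ : (0:ℝ) ≤ a ^ μ := Real.rpow_nonneg ha.le μ
    have hbμ : (0:ℝ) ≤ b ^ μ := Real.rpow_nonneg hb.le μ
    have h2μ : (0:ℝ) < 2 ^ μ := Real.rpow_pos_of_pos (by norm_num) μ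
    rcases le_total a b with hab | hab
    · have hle : 1 + |m| ≤ 2 * b := by
        have : 1 + |m| ≤ a + b := by simp only [ha', hb']; linarith
        linarith
      calc (1 + |m|) ^ μ ≤ (2 * b) ^ μ :=
            Real.rpow_le_rpow (by positivity) hle hμ
        _ = 2 ^ μ * b ^ μ := Real.mul_rpow (by norm_num) hb.le
        _ ≤ 2 ^ μ * (a ^ μ + b ^ μ) := by nlinarith
    · have hle : 1 + |m| ≤ 2 * a := by
        have : 1 + |m| ≤ a + b := by simp only [ha', hb']; linarith
        linarith
      calc (1 + |m|) ^ μ ≤ (2 * a) ^ μ :=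
            Real.rpow_le_rpow (by positivity) hle hμ
        _ = 2 ^ μ * a ^ μ := Real.mul_rpow (by norm_num) ha.le
        _ ≤ 2 ^ μ * (a ^ μ + b ^ μ) := by nlinarith
  have h1 : a ^ (-μ) * a ^ μ = 1 := by
    rw [← Real.rpow_add ha]; simp
  have h2 : b ^ (-μ) * b ^ μ = 1 := by
    rw [← Real.rpow_add hb]; simp
  have hE0 : (0:ℝ) < Real.exp (β * |m|) := Real.exp_pos _
  have hE1 : (0:ℝ) < Real.exp (β * |m - t|) := Real.exp_pos _
  have hE2 : (0:ℝ) < Real.exp (β * |t|) := Real.exp_pos _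
  have expand : 2 ^ μ * (b ^ (-μ) + a ^ (-μ)) *
      ((a ^ μ * Real.exp (β * |m - t|)) * (b ^ μ * Real.exp (β * |t|))) =
      2 ^ μ * (a ^ μ + b ^ μ) * (Real.exp (β * |m - t|) * Real.exp (β * |t|)) := by
    linear_combination (2 ^ μ * Real.exp (β * |m - t|) * Real.exp (β * |t|) * a ^ μ) * h2 +
      (2 ^ μ * Real.exp (β * |m - t|) * Real.exp (β * |t|) * b ^ μ) * h1
  have hsum : (0:ℝ) ≤ 2 ^ μ * (a ^ μ + b ^ μ) := by
    have haμ : (0:ℝ) ≤ a ^ μ := Real.rpow_nonneg ha.le μ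
    have hbμ : (0:ℝ) ≤ b ^ μ := Real.rpow_nonneg hb.le μ
    positivity
  calc Wfun β μ m = (1 + |m|) ^ μ * Real.exp (β * |m|) := rfl
    _ ≤ (2 ^ μ * (a ^ μ + b ^ μ)) * Real.exp (β * |m|) :=
        mul_le_mul_of_nonneg_right hpoly hE0.le
    _ ≤ (2 ^ μ * (a ^ μ + b ^ μ)) * (Real.exp (β * |m - t|) * Real.exp (β * |t|)) :=
        mul_le_mul_of_nonneg_left hexp hsum
    _ = 2 ^ μ * (b ^ (-μ) + a ^ (-μ)) *
        ((a ^ μ * Real.exp (β * |m - t|)) * (b ^ μ * Real.exp (β * |t|))) := expand.symm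
    _ = 2 ^ μ * ((1 + |t|) ^ (-μ) + (1 + |m - t|) ^ (-μ)) *
        (Wfun β μ (m - t) * Wfun β μ t) := by rw [Wfun, Wfun]

lemma pointwise_bound {β μ F G : ℝ} (hβ : 0 ≤ β) (hμ : 0 ≤ μ) (f g : ℝ → ℂ)
    (hf : ∀ x, Wfun β μ x * ‖f x‖ ≤ F) (hg : ∀ x, Wfun β μ x * ‖g x‖ ≤ G) (m t : ℝ) :
    Wfun β μ m * ‖f (m - t) * g t‖ ≤
      2 ^ μ * ((1 + |t|) ^ (-μ) + (1 + |m - t|) ^ (-μ)) * (F * G) := by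
  have hS : (0:ℝ) ≤ 2 ^ μ * ((1 + |t|) ^ (-μ) + (1 + |m - t|) ^ (-μ)) := by
    have h1 : (0:ℝ) ≤ (1 + |t|) ^ (-μ) := Real.rpow_nonneg (by positivity) _
    have h2 : (0:ℝ) ≤ (1 + |m - t|) ^ (-μ) := Real.rpow_nonneg (by positivity) _
    have h3 : (0:ℝ) < (2:ℝ) ^ μ := Real.rpow_pos_of_pos (by norm_num) μ
    positivity
  have hF0 : 0 ≤ F := le_trans (mul_nonneg (Wfun_pos β μ (m - t)).le (norm_nonneg _)) (hf (m - t))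
  have hfs := hf (m - t)
  have hgs := hg t
  calc Wfun β μ m * ‖f (m - t) * g t‖
      ≤ (2 ^ μ * ((1 + |t|) ^ (-μ) + (1 + |m - t|) ^ (-μ)) *
          (Wfun β μ (m - t) * Wfun β μ t)) * ‖f (m - t) * g t‖ :=
        mul_le_mul_of_nonneg_right (Wfun_key hβ hμ m t) (norm_nonneg _)
    _ = (2 ^ μ * ((1 + |t|) ^ (-μ) + (1 + |m - t|) ^ (-μ))) *
          ((Wfun β μ (m - t) * ‖f (m - t)‖) * (Wfun β μ t * ‖g t‖)) := by
        rw [norm_mul]; ring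
    _ ≤ (2 ^ μ * ((1 + |t|) ^ (-μ) + (1 + |m - t|) ^ (-μ))) * (F * G) := by
        refine mul_le_mul_of_nonneg_left ?_ hS
        exact mul_le_mul hfs hgs (mul_nonneg (Wfun_pos β μ t).le (norm_nonneg _)) hF0

/-- For `β > 0`, `μ > 1`, the map `(f,g) ↦ (2π)^{-1/2} f ∗ g` is a continuous bilinear map
from `E_{(β,μ)} × E_{(β,μ)}` to `E_{(β,μ)}`: the convolution belongs to the space and
`‖(2π)^{-1/2} f ∗ g‖_{(β,μ)} ≤ C ‖f‖_{(β,μ)} ‖g‖_{(β,μ)}`. -/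
theorem stmt4 (β μ : ℝ) (hβ : 0 < β) (hμ : 1 < μ) :
    ∃ C : ℝ, 0 < C ∧
      ∀ f g : ℝ → ℂ, MemE β μ f → MemE β μ g →
        MemE β μ (fun m => (1 / Real.sqrt (2 * Real.pi)) * ∫ m₁ : ℝ, f (m - m₁) * g m₁) ∧
        Enorm β μ (fun m => (1 / Real.sqrt (2 * Real.pi)) * ∫ m₁ : ℝ, f (m - m₁) * g m₁)
          ≤ C * Enorm β μ f * Enorm β μ g := by
  have hμ0 : (0:ℝ) ≤ μ := by linarith
  have hs : (0:ℝ) < Real.sqrt (2 * Real.pi) := Real.sqrt_pos.mpr (by positivity)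
  set c : ℝ := 1 / Real.sqrt (2 * Real.pi) with hc
  have hc0 : 0 < c := by positivity
  have h2μ : (0:ℝ) < (2:ℝ) ^ μ := Real.rpow_pos_of_pos (by norm_num) μ
  have hI : Integrable (fun t : ℝ => (1 + |t|) ^ (-μ)) := by
    have h := integrable_one_add_norm (E := ℝ) (μ := volume)
      (r := μ) (by simpa using hμ)
    simpa [Real.norm_eq_abs] using h
  set I : ℝ := ∫ t : ℝ, (1 + |t|) ^ (-μ) with hIdef
  have hI0 : 0 ≤ I :=
    integral_nonneg fun t => Real.rpow_nonneg (by positivity) _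
  refine ⟨c * 2 ^ μ * (2 * I) + 1, by positivity, ?_⟩
  intro f g hf hg
  set F := Enorm β μ f with hF
  set G := Enorm β μ g with hG
  have hF0 : 0 ≤ F := Real.iSup_nonneg fun m => by
    rw [Eweight_eq]; exact mul_nonneg (Wfun_pos β μ m).le (norm_nonneg _)
  have hG0 : 0 ≤ G := Real.iSup_nonneg fun m => by
    rw [Eweight_eq]; exact mul_nonneg (Wfun_pos β μ m).le (norm_nonneg _)
  have hfb : ∀ x, Wfun β μ x * ‖f x‖ ≤ F := fun x => by
    rw [← Eweight_eq]; exact le_ciSup hf.2 x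
  have hgb : ∀ x, Wfun β μ x * ‖g x‖ ≤ G := fun x => by
    rw [← Eweight_eq]; exact le_ciSup hg.2 x
  -- integrability of the translated kernel
  have hIm : ∀ m : ℝ, Integrable (fun t : ℝ => (1 + |m - t|) ^ (-μ)) := fun m =>
    hI.comp_sub_left m
  -- the main pointwise norm bound on the integral
  have hbound : ∀ m : ℝ, ‖∫ t : ℝ, f (m - t) * g t‖ ≤
      2 ^ μ * (F * G) / Wfun β μ m * (2 * I) := by
    intro m
    have hWm := Wfun_pos β μ m
    set K : ℝ := 2 ^ μ * (F * G) / Wfun β μ m with hK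
    have hptw : ∀ t : ℝ, ‖f (m - t) * g t‖ ≤
        K * ((1 + |t|) ^ (-μ) + (1 + |m - t|) ^ (-μ)) := by
      intro t
      have h := pointwise_bound hβ.le hμ0 f g hfb hgb m t
      have h' : ‖f (m - t) * g t‖ ≤
          2 ^ μ * ((1 + |t|) ^ (-μ) + (1 + |m - t|) ^ (-μ)) * (F * G) / Wfun β μ m :=
        (le_div_iff₀ hWm).mpr (by rw [mul_comm]; exact h)
      calc ‖f (m - t) * g t‖ ≤ _ := h'
        _ = K * ((1 + |t|) ^ (-μ) + (1 + |m - t|) ^ (-μ)) := by rw [hK]; ring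
    have hKint : Integrable (fun t : ℝ =>
        K * ((1 + |t|) ^ (-μ) + (1 + |m - t|) ^ (-μ))) :=
      (hI.add (hIm m)).const_mul K
    have hval : (∫ t : ℝ, K * ((1 + |t|) ^ (-μ) + (1 + |m - t|) ^ (-μ))) = K * (2 * I) := by
      rw [integral_const_mul, integral_add hI (hIm m),
        integral_sub_left_eq_self (fun t : ℝ => (1 + |t|) ^ (-μ)) volume m, ← hIdef]
      ring
    calc ‖∫ t : ℝ, f (m - t) * g t‖
        ≤ ∫ t : ℝ, K * ((1 + |t|) ^ (-μ) + (1 + |m - t|) ^ (-μ)) :=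
          norm_integral_le_of_norm_le hKint (Filter.Eventually.of_forall hptw)
      _ = K * (2 * I) := hval
      _ = 2 ^ μ * (F * G) / Wfun β μ m * (2 * I) := by rw [hK]
  -- norm of the scalar
  have hcnorm : ∀ z : ℂ, ‖(1 / (Real.sqrt (2 * Real.pi) : ℂ)) * z‖ = c * ‖z‖ := by
    intro z
    rw [norm_mul, norm_div, norm_one, Complex.norm_real, Real.norm_eq_abs,
      abs_of_pos hs, hc]
  -- weight bound for the convolution
  have hEw : ∀ m : ℝ, Eweight β μ
      (fun m => (1 / Real.sqrt (2 * Real.pi)) * ∫ m₁ : ℝ, f (m - m₁) * g m₁) m ≤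
      c * 2 ^ μ * (2 * I) * (F * G) := by
    intro m
    have hWm := Wfun_pos β μ m
    rw [Eweight_eq]
    calc Wfun β μ m * ‖(1 / (Real.sqrt (2 * Real.pi) : ℂ)) * ∫ m₁ : ℝ, f (m - m₁) * g m₁‖
        = (Wfun β μ m * c) * ‖∫ m₁ : ℝ, f (m - m₁) * g m₁‖ := by
          rw [hcnorm]; ring
      _ ≤ (Wfun β μ m * c) * (2 ^ μ * (F * G) / Wfun β μ m * (2 * I)) :=
          mul_le_mul_of_nonneg_left (hbound m) (by positivity)
      _ = c * 2 ^ μ * (2 * I) * (F * G) := by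
          field_simp
  -- integrability of g
  have hgInt : Integrable g := by
    refine (hI.const_mul G).mono' hg.1.aestronglyMeasurable
      (Filter.Eventually.of_forall fun t => ?_)
    have h1 := hgb t
    have hb : (0:ℝ) < 1 + |t| := by positivity
    have hbp : (0:ℝ) < (1 + |t|) ^ μ := Real.rpow_pos_of_pos hb μ
    have h2 : (1 + |t|) ^ μ * ‖g t‖ ≤ Wfun β μ t * ‖g t‖ := by
      refine mul_le_mul_of_nonneg_right ?_ (norm_nonneg _)
      unfold Wfun
      nlinarith [Real.one_le_exp (show (0:ℝ) ≤ β * |t| by positivity),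
        Real.rpow_nonneg hb.le μ]
    rw [Real.rpow_neg hb.le, mul_comm G]
    rw [inv_mul_eq_div, le_div_iff₀ hbp]
    calc ‖g t‖ * (1 + |t|) ^ μ = (1 + |t|) ^ μ * ‖g t‖ := by ring
      _ ≤ Wfun β μ t * ‖g t‖ := h2
      _ ≤ G := h1
  -- boundedness of f
  have hfBdd : BddAbove (Set.range fun x => ‖f x‖) := by
    refine ⟨F, ?_⟩
    rintro _ ⟨x, rfl⟩
    have h1 := hfb x
    have h2 : ‖f x‖ ≤ Wfun β μ x * ‖f x‖ := by
      nlinarith [one_le_Wfun hβ.le hμ0 x, norm_nonneg (f x)]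
    exact h2.trans h1
  -- continuity of the convolution
  have hconvCont : Continuous
      (fun m => (1 / (Real.sqrt (2 * Real.pi) : ℂ)) * ∫ m₁ : ℝ, f (m - m₁) * g m₁) := by
    have hc1 : Continuous (g ⋆[ContinuousLinearMap.mul ℝ ℂ, volume] f) :=
      hfBdd.continuous_convolution_right_of_integrable _ hgInt hf.1
    have heq : (fun m => (1 / (Real.sqrt (2 * Real.pi) : ℂ)) * ∫ m₁ : ℝ, f (m - m₁) * g m₁)
        = fun m => (1 / (Real.sqrt (2 * Real.pi) : ℂ)) *
            (g ⋆[ContinuousLinearMap.mul ℝ ℂ, volume] f) m := by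
      funext m
      congr 1
      rw [convolution_def]
      simp only [ContinuousLinearMap.mul_apply']
      exact integral_congr_ae (Filter.Eventually.of_forall fun t => (mul_comm _ _))
    rw [heq]
    exact continuous_const.mul hc1
  constructor
  · exact ⟨hconvCont, ⟨c * 2 ^ μ * (2 * I) * (F * G), by
      rintro _ ⟨m, rfl⟩; exact hEw m⟩⟩
  · refine ciSup_le fun m => ?_
    refine (hEw m).trans ?_
    nlinarith [mul_nonneg hF0 hG0]
end

section
/- Let μ > d + 1 where d ≥ 0 is an integer, β > 0, and let P be a polynomial with complex coefficients of degree at most d. Then there exists C > 0 such that for all f, g ∈ E_{(β,μ)}, the function m ↦ ∫_{-∞}^{∞} P(i(m−m₁)) f(m−m₁) g(m₁) dm₁ belongs to E_{(β,μ−d)} and its norm there is at most C ‖f‖_{(β,μ)} ‖g‖_{(β,μ)}. -/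
open MeasureTheory Real Complex

private lemma japanese (p : ℝ) (hp : 1 < p) :
    Integrable (fun x : ℝ => (1 + |x|) ^ (-p)) := by
  have h := integrable_one_add_norm (E := ℝ) (μ := volume) (r := p) (by simpa using hp)
  simpa [Real.rpow_neg, Real.norm_eq_abs, add_nonneg, abs_nonneg] using h

private lemma eweight_nonneg (β μ : ℝ) (h : ℝ → ℂ) (m : ℝ) : 0 ≤ Eweight β μ h m := by
  unfold Eweight
  have := norm_nonneg (h m)
  positivity

private lemma enorm_nonneg (β μ : ℝ) (h : ℝ → ℂ)
    (hb : BddAbove (Set.range (Eweight β μ h))) : 0 ≤ Enorm β μ h :=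
  le_trans (eweight_nonneg β μ h 0) (le_ciSup hb 0)

private lemma memE_pointwise {β μ : ℝ} {f : ℝ → ℂ} (hf : MemE β μ f) (x : ℝ) :
    ‖f x‖ ≤ Enorm β μ f * ((1 + |x|) ^ (-μ) * Real.exp (-(β * |x|))) := by
  have h1 : Eweight β μ f x ≤ Enorm β μ f := le_ciSup hf.2 x
  unfold Eweight at h1
  have hax : (0:ℝ) < 1 + |x| := by positivity
  rw [Real.rpow_neg hax.le, Real.exp_neg, ← mul_inv, ← div_eq_mul_inv, le_div_iff₀ (by positivity)]
  calc ‖f x‖ * ((1 + |x|) ^ μ * Real.exp (β * |x|))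
      = (1 + |x|) ^ μ * Real.exp (β * |x|) * ‖f x‖ := by ring
    _ ≤ Enorm β μ f := h1

private lemma polyBound (d : ℕ) (P : Polynomial ℂ) (hP : P.natDegree ≤ d) (x : ℝ) :
    ‖P.eval (Complex.I * (x : ℂ))‖ ≤
      ((∑ i ∈ Finset.range (d + 1), ‖P.coeff i‖) + 1) * (1 + |x|) ^ ((d : ℝ)) := by
  have hx : (0:ℝ) ≤ 1 + |x| := by positivity
  have habs : ‖Complex.I * (x : ℂ)‖ = |x| := by
    rw [norm_mul, Complex.norm_I, one_mul, Complex.norm_real, Real.norm_eq_abs]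
  rw [Real.rpow_natCast]
  have h1 : ‖P.eval (Complex.I * (x : ℂ))‖ ≤
      (∑ i ∈ Finset.range (d + 1), ‖P.coeff i‖) * (1 + |x|) ^ d := by
    rw [Polynomial.eval_eq_sum_range' (Nat.lt_succ_of_le hP)]
    refine (norm_sum_le _ _).trans ?_
    rw [Finset.sum_mul]
    refine Finset.sum_le_sum fun i hi => ?_
    rw [norm_mul, norm_pow, habs]
    refine mul_le_mul_of_nonneg_left ?_ (norm_nonneg _)
    calc |x| ^ i ≤ (1 + |x|) ^ i :=
          pow_le_pow_left₀ (abs_nonneg x) (by linarith [abs_nonneg x]) i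
      _ ≤ (1 + |x|) ^ d :=
          pow_le_pow_right₀ (by linarith [abs_nonneg x]) (Finset.mem_range_succ_iff.mp hi)
  refine h1.trans ?_
  refine mul_le_mul_of_nonneg_right (by linarith) (by positivity)

private lemma keyIneq {p q A B M : ℝ} (hp : 0 ≤ p) (hpq : p ≤ q)
    (hA : 1 ≤ A) (hB : 1 ≤ B) (hM0 : 0 ≤ M) (hM : M ≤ A + B) :
    M ^ p * A ^ (-p) * B ^ (-q) ≤ 2 ^ p * (B ^ (-q) + A ^ (-p)) := by
  have hA0 : (0:ℝ) < A := by linarith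
  have hB0 : (0:ℝ) < B := by linarith
  have hAn : (0:ℝ) ≤ A ^ (-p) := Real.rpow_nonneg hA0.le _
  have hBn : (0:ℝ) ≤ B ^ (-q) := Real.rpow_nonneg hB0.le _
  have h2 : (0:ℝ) ≤ (2:ℝ) ^ p := Real.rpow_nonneg (by norm_num) _
  rcases le_total B A with hBA | hAB
  · have hM2 : M ≤ 2 * A := by linarith
    have : M ^ p ≤ (2 * A) ^ p := Real.rpow_le_rpow hM0 hM2 hp
    rw [Real.mul_rpow (by norm_num) hA0.le] at this
    calc M ^ p * A ^ (-p) * B ^ (-q)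
        ≤ 2 ^ p * A ^ p * A ^ (-p) * B ^ (-q) := by
          refine mul_le_mul_of_nonneg_right (mul_le_mul_of_nonneg_right this hAn) hBn
      _ = 2 ^ p * (A ^ (p + -p)) * B ^ (-q) := by rw [Real.rpow_add hA0]; ring
      _ = 2 ^ p * B ^ (-q) := by simp
      _ ≤ 2 ^ p * (B ^ (-q) + A ^ (-p)) := by nlinarith
  · have hM2 : M ≤ 2 * B := by linarith
    have h1 : M ^ p ≤ (2 * B) ^ p := Real.rpow_le_rpow hM0 hM2 hp
    rw [Real.mul_rpow (by norm_num) hB0.le] at h1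
    have hBd : B ^ (p + -q) ≤ 1 :=
      Real.rpow_le_one_of_one_le_of_nonpos hB (by linarith)
    calc M ^ p * A ^ (-p) * B ^ (-q)
        ≤ 2 ^ p * B ^ p * A ^ (-p) * B ^ (-q) := by
          refine mul_le_mul_of_nonneg_right (mul_le_mul_of_nonneg_right h1 hAn) hBn
      _ = 2 ^ p * A ^ (-p) * B ^ (p + -q) := by rw [Real.rpow_add hB0]; ring
      _ ≤ 2 ^ p * A ^ (-p) * 1 := by
          refine mul_le_mul_of_nonneg_left hBd (by positivity)
      _ = 2 ^ p * A ^ (-p) := by ring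
      _ ≤ 2 ^ p * (B ^ (-q) + A ^ (-p)) := by nlinarith

/-- For `μ > d+1`, `β > 0`, and a polynomial `P` of degree at most `d`, the bilinear map
`(f,g) ↦ (m ↦ ∫ P(i(m-m₁)) f(m-m₁) g(m₁) dm₁)` maps `E_{(β,μ)} × E_{(β,μ)}` continuously
into `E_{(β,μ-d)}`. -/
theorem stmt17 (d : ℕ) (β μ : ℝ) (hβ : 0 < β) (hμ : (d : ℝ) + 1 < μ)
    (P : Polynomial ℂ) (hP : P.natDegree ≤ d) :
    ∃ C : ℝ, 0 < C ∧
      ∀ f g : ℝ → ℂ, MemE β μ f → MemE β μ g →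
        MemE β (μ - d)
          (fun m => ∫ m₁ : ℝ, P.eval (Complex.I * ((m : ℂ) - (m₁ : ℂ))) * f (m - m₁) * g m₁) ∧
        Enorm β (μ - d)
          (fun m => ∫ m₁ : ℝ, P.eval (Complex.I * ((m : ℂ) - (m₁ : ℂ))) * f (m - m₁) * g m₁)
          ≤ C * Enorm β μ f * Enorm β μ g := by
  have hd0 : (0:ℝ) ≤ (d:ℝ) := Nat.cast_nonneg d
  have hμ1 : (1:ℝ) < μ := by linarith
  have hp1 : (1:ℝ) < μ - d := by linarith
  have hp0 : (0:ℝ) ≤ μ - d := by linarith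
  set C' : ℝ := (∑ i ∈ Finset.range (d + 1), ‖P.coeff i‖) + 1 with hC'def
  have hC'pos : 0 < C' := by
    have : (0:ℝ) ≤ ∑ i ∈ Finset.range (d + 1), ‖P.coeff i‖ :=
      Finset.sum_nonneg fun i _ => norm_nonneg _
    rw [hC'def]; linarith
  have hK₁ : Integrable (fun x : ℝ => (1 + |x|) ^ (-μ)) := japanese μ hμ1
  have hK₂ : Integrable (fun x : ℝ => (1 + |x|) ^ (-(μ - (d:ℝ)))) := japanese _ hp1
  have hK₁0 : 0 ≤ ∫ x : ℝ, (1 + |x|) ^ (-μ) :=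
    integral_nonneg fun x => Real.rpow_nonneg (by positivity) _
  have hK₂0 : 0 ≤ ∫ x : ℝ, (1 + |x|) ^ (-(μ - (d:ℝ))) :=
    integral_nonneg fun x => Real.rpow_nonneg (by positivity) _
  set K : ℝ := (∫ x : ℝ, (1 + |x|) ^ (-μ)) + (∫ x : ℝ, (1 + |x|) ^ (-(μ - (d:ℝ)))) + 1 with hKdef
  have hKpos : 0 < K := by rw [hKdef]; linarith
  have h2p : (0:ℝ) ≤ 2 ^ (μ - (d:ℝ)) := (Real.rpow_pos_of_pos two_pos _).le
  refine ⟨2 ^ (μ - (d:ℝ)) * C' * K,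
    mul_pos (mul_pos (Real.rpow_pos_of_pos two_pos _) hC'pos) hKpos, ?_⟩
  intro f g hf hg
  set Nf := Enorm β μ f with hNfdef
  set Ng := Enorm β μ g with hNgdef
  have hNf : 0 ≤ Nf := enorm_nonneg _ _ _ hf.2
  have hNg : 0 ≤ Ng := enorm_nonneg _ _ _ hg.2
  have hcnn0 : (0:ℝ) ≤ C' * Nf * Ng := mul_nonneg (mul_nonneg hC'pos.le hNf) hNg
  set F : ℝ → ℝ → ℂ :=
    fun m m₁ => P.eval (Complex.I * ((m : ℂ) - (m₁ : ℂ))) * f (m - m₁) * g m₁ with hFdef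
  have hgoalEq : (fun m : ℝ => ∫ m₁ : ℝ,
      P.eval (Complex.I * ((m : ℂ) - (m₁ : ℂ))) * f (m - m₁) * g m₁)
      = fun m => ∫ m₁ : ℝ, F m m₁ := by
    funext m
    simp only [hFdef]
  rw [hgoalEq]
  -- pointwise bound on the integrand
  have hFbound : ∀ m m₁ : ℝ, ‖F m m₁‖ ≤
      C' * Nf * Ng * ((1 + |m - m₁|) ^ (-(μ - (d:ℝ))) * (1 + |m₁|) ^ (-μ)
        * Real.exp (-(β * |m - m₁|)) * Real.exp (-(β * |m₁|))) := by
    intro m m₁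
    have hc : Complex.I * ((m : ℂ) - (m₁ : ℂ)) = Complex.I * (((m - m₁ : ℝ) : ℂ)) := by
      push_cast
      ring
    have hA : (0:ℝ) < 1 + |m - m₁| := by positivity
    have h1 : ‖F m m₁‖ = ‖P.eval (Complex.I * (((m - m₁ : ℝ) : ℂ)))‖
        * ‖f (m - m₁)‖ * ‖g m₁‖ := by
      simp only [hFdef, hc, norm_mul]
    have hPb := polyBound d P hP (m - m₁)
    have hfb := memE_pointwise hf (m - m₁)
    have hgb := memE_pointwise hg m₁
    have hb0 : (0:ℝ) ≤ C' * (1 + |m - m₁|) ^ ((d:ℝ)) :=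
      mul_nonneg hC'pos.le (Real.rpow_nonneg hA.le _)
    have hb1 : (0:ℝ) ≤ Nf * ((1 + |m - m₁|) ^ (-μ) * Real.exp (-(β * |m - m₁|))) :=
      mul_nonneg hNf (by positivity)
    have hsplit : C' * Nf * Ng * ((1 + |m - m₁|) ^ (-(μ - (d:ℝ))) * (1 + |m₁|) ^ (-μ)
          * Real.exp (-(β * |m - m₁|)) * Real.exp (-(β * |m₁|)))
        = (C' * (1 + |m - m₁|) ^ ((d:ℝ)))
          * (Nf * ((1 + |m - m₁|) ^ (-μ) * Real.exp (-(β * |m - m₁|))))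
          * (Ng * ((1 + |m₁|) ^ (-μ) * Real.exp (-(β * |m₁|)))) := by
      rw [show -(μ - (d:ℝ)) = (d:ℝ) + -μ by ring, Real.rpow_add hA]
      ring
    rw [h1, hsplit]
    exact mul_le_mul (mul_le_mul hPb hfb (norm_nonneg _) hb0) hgb
      (norm_nonneg _) (mul_nonneg hb0 hb1)
  -- global dominating function (independent of m)
  have hdom : ∀ m m₁ : ℝ, ‖F m m₁‖ ≤ C' * Nf * Ng * (1 + |m₁|) ^ (-μ) := by
    intro m m₁
    refine (hFbound m m₁).trans ?_
    have hA : (0:ℝ) < 1 + |m - m₁| := by positivity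
    have h1 : (1 + |m - m₁|) ^ (-(μ - (d:ℝ))) ≤ 1 :=
      Real.rpow_le_one_of_one_le_of_nonpos (by linarith [abs_nonneg (m - m₁)]) (by linarith)
    have h2 : Real.exp (-(β * |m - m₁|)) ≤ 1 := by
      rw [Real.exp_le_one_iff]
      have := abs_nonneg (m - m₁)
      nlinarith
    have h3 : Real.exp (-(β * |m₁|)) ≤ 1 := by
      rw [Real.exp_le_one_iff]
      have := abs_nonneg m₁
      nlinarith
    have hB : (0:ℝ) ≤ (1 + |m₁|) ^ (-μ) := Real.rpow_nonneg (by positivity) _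
    have key : (1 + |m - m₁|) ^ (-(μ - (d:ℝ))) * (1 + |m₁|) ^ (-μ)
        * Real.exp (-(β * |m - m₁|)) * Real.exp (-(β * |m₁|)) ≤ (1 + |m₁|) ^ (-μ) := by
      have e1 : (0:ℝ) ≤ Real.exp (-(β * |m - m₁|)) := (Real.exp_pos _).le
      have e2 : (0:ℝ) ≤ Real.exp (-(β * |m₁|)) := (Real.exp_pos _).le
      have hr : (0:ℝ) ≤ (1 + |m - m₁|) ^ (-(μ - (d:ℝ))) := Real.rpow_nonneg hA.le _
      nlinarith [mul_nonneg hr hB, mul_nonneg (mul_nonneg hr hB) e1]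
    exact mul_le_mul_of_nonneg_left key hcnn0
  have hbound_int : Integrable (fun m₁ : ℝ => C' * Nf * Ng * (1 + |m₁|) ^ (-μ)) :=
    hK₁.const_mul _
  -- joint continuity of the integrand
  have hFcont : Continuous fun q : ℝ × ℝ => F q.1 q.2 := by
    simp only [hFdef]
    have hcP : Continuous fun q : ℝ × ℝ => P.eval (Complex.I * ((q.1 : ℂ) - (q.2 : ℂ))) := by
      apply P.continuous.comp
      fun_prop
    exact (hcP.mul (hf.1.comp (continuous_fst.sub continuous_snd))).mul (hg.1.comp continuous_snd)
  have hFmeas : ∀ m : ℝ, AEStronglyMeasurable (fun m₁ => F m m₁) volume := fun m =>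
    (hFcont.comp (continuous_const.prodMk continuous_id)).aestronglyMeasurable
  -- integrability for each m
  have hintF : ∀ m : ℝ, Integrable (fun m₁ => F m m₁) := by
    intro m
    refine hbound_int.mono (hFmeas m) (ae_of_all _ fun m₁ => ?_)
    rw [Real.norm_eq_abs, _root_.abs_of_nonneg
      (mul_nonneg hcnn0 (Real.rpow_nonneg (by positivity : (0:ℝ) ≤ 1 + |m₁|) (-μ)))]
    exact hdom m m₁
  -- continuity of the convolution
  have hcont : Continuous fun m => ∫ m₁ : ℝ, F m m₁ := by
    rw [continuous_iff_continuousAt]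
    intro m₀
    apply continuousAt_of_dominated (bound := fun m₁ => C' * Nf * Ng * (1 + |m₁|) ^ (-μ))
    · exact Filter.Eventually.of_forall hFmeas
    · refine Filter.Eventually.of_forall fun m => ae_of_all _ fun m₁ => ?_
      exact hdom m m₁
    · exact hbound_int
    · exact ae_of_all _ fun m₁ =>
        (hFcont.comp (continuous_id.prodMk continuous_const)).continuousAt
  -- the main weighted estimate
  have est : ∀ m : ℝ, Eweight β (μ - (d:ℝ)) (fun m => ∫ m₁ : ℝ, F m m₁) m
      ≤ 2 ^ (μ - (d:ℝ)) * C' * K * Nf * Ng := by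
    intro m
    have hM : (0:ℝ) < 1 + |m| := by positivity
    have hw0 : (0:ℝ) ≤ (1 + |m|) ^ (μ - (d:ℝ)) * Real.exp (β * |m|) := by positivity
    -- pointwise weighted bound
    have hw : ∀ m₁ : ℝ, (1 + |m|) ^ (μ - (d:ℝ)) * Real.exp (β * |m|) * ‖F m m₁‖
        ≤ 2 ^ (μ - (d:ℝ)) * (C' * Nf * Ng)
          * ((1 + |m₁|) ^ (-μ) + (1 + |m - m₁|) ^ (-(μ - (d:ℝ)))) := by
      intro m₁
      have hA : (1:ℝ) ≤ 1 + |m - m₁| := by linarith [abs_nonneg (m - m₁)]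
      have hB : (1:ℝ) ≤ 1 + |m₁| := by linarith [abs_nonneg m₁]
      have htri : |m| ≤ |m - m₁| + |m₁| := by
        have := abs_add_le (m - m₁) m₁
        simpa using this
      have hexp : Real.exp (β * |m|) * (Real.exp (-(β * |m - m₁|)) * Real.exp (-(β * |m₁|)))
          ≤ 1 := by
        rw [← Real.exp_add, ← Real.exp_add, Real.exp_le_one_iff]
        nlinarith [mul_le_mul_of_nonneg_left htri hβ.le, mul_add β |m - m₁| |m₁|]
      have hkey := keyIneq (p := μ - (d:ℝ)) (q := μ) (A := 1 + |m - m₁|) (B := 1 + |m₁|)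
        (M := 1 + |m|) hp0 (by linarith) hA hB (by positivity) (by linarith [htri])
      have h1 := mul_le_mul_of_nonneg_left (hFbound m m₁) hw0
      refine h1.trans ?_
      have hhh : (1 + |m|) ^ (μ - (d:ℝ)) * Real.exp (β * |m|)
          * (C' * Nf * Ng * ((1 + |m - m₁|) ^ (-(μ - (d:ℝ))) * (1 + |m₁|) ^ (-μ)
            * Real.exp (-(β * |m - m₁|)) * Real.exp (-(β * |m₁|))))
          = (C' * Nf * Ng)
            * (((1 + |m|) ^ (μ - (d:ℝ)) * (1 + |m - m₁|) ^ (-(μ - (d:ℝ))) * (1 + |m₁|) ^ (-μ))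
              * (Real.exp (β * |m|) * (Real.exp (-(β * |m - m₁|)) * Real.exp (-(β * |m₁|))))) := by
        ring
      rw [hhh]
      have hprod0 : (0:ℝ) ≤ (1 + |m|) ^ (μ - (d:ℝ)) * (1 + |m - m₁|) ^ (-(μ - (d:ℝ)))
          * (1 + |m₁|) ^ (-μ) := by positivity
      have hb3 : (C' * Nf * Ng)
            * (((1 + |m|) ^ (μ - (d:ℝ)) * (1 + |m - m₁|) ^ (-(μ - (d:ℝ))) * (1 + |m₁|) ^ (-μ))
              * (Real.exp (β * |m|) * (Real.exp (-(β * |m - m₁|)) * Real.exp (-(β * |m₁|)))))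
          ≤ (C' * Nf * Ng)
            * (((1 + |m|) ^ (μ - (d:ℝ)) * (1 + |m - m₁|) ^ (-(μ - (d:ℝ))) * (1 + |m₁|) ^ (-μ))
              * 1) :=
        mul_le_mul_of_nonneg_left (mul_le_mul_of_nonneg_left hexp hprod0) hcnn0
      refine hb3.trans ?_
      rw [mul_one]
      have hb4 : (C' * Nf * Ng)
            * ((1 + |m|) ^ (μ - (d:ℝ)) * (1 + |m - m₁|) ^ (-(μ - (d:ℝ))) * (1 + |m₁|) ^ (-μ))
          ≤ (C' * Nf * Ng)
            * (2 ^ (μ - (d:ℝ)) * ((1 + |m₁|) ^ (-μ) + (1 + |m - m₁|) ^ (-(μ - (d:ℝ))))) :=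
        mul_le_mul_of_nonneg_left hkey hcnn0
      refine hb4.trans (le_of_eq ?_)
      ring
    -- integrability of the weighted majorant
    have hcomp : Integrable (fun m₁ : ℝ => (1 + |m - m₁|) ^ (-(μ - (d:ℝ)))) := by
      have := hK₂.comp_sub_left m
      simpa using this
    have hmaj : Integrable (fun m₁ : ℝ => 2 ^ (μ - (d:ℝ)) * (C' * Nf * Ng)
        * ((1 + |m₁|) ^ (-μ) + (1 + |m - m₁|) ^ (-(μ - (d:ℝ))))) :=
      (hK₁.add hcomp).const_mul _
    have hwint : Integrable (fun m₁ : ℝ =>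
        (1 + |m|) ^ (μ - (d:ℝ)) * Real.exp (β * |m|) * ‖F m m₁‖) := by
      have := (hintF m).norm.const_mul ((1 + |m|) ^ (μ - (d:ℝ)) * Real.exp (β * |m|))
      simpa [mul_assoc] using this
    have step1 : (1 + |m|) ^ (μ - (d:ℝ)) * Real.exp (β * |m|)
        * ‖∫ m₁ : ℝ, F m m₁‖
        ≤ (1 + |m|) ^ (μ - (d:ℝ)) * Real.exp (β * |m|) * ∫ m₁ : ℝ, ‖F m m₁‖ := by
      refine mul_le_mul_of_nonneg_left ?_ hw0
      have := norm_integral_le_integral_norm (μ := volume) (fun m₁ => F m m₁)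
      simpa using this
    have step2 : (1 + |m|) ^ (μ - (d:ℝ)) * Real.exp (β * |m|)
        * ∫ m₁ : ℝ, ‖F m m₁‖
        = ∫ m₁ : ℝ, (1 + |m|) ^ (μ - (d:ℝ)) * Real.exp (β * |m|) * ‖F m m₁‖ :=
      (integral_const_mul _ _).symm
    have step3 : (∫ m₁ : ℝ, (1 + |m|) ^ (μ - (d:ℝ)) * Real.exp (β * |m|)
          * ‖F m m₁‖)
        ≤ ∫ m₁ : ℝ, 2 ^ (μ - (d:ℝ)) * (C' * Nf * Ng)
          * ((1 + |m₁|) ^ (-μ) + (1 + |m - m₁|) ^ (-(μ - (d:ℝ)))) :=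
      integral_mono hwint hmaj hw
    have step4 : (∫ m₁ : ℝ, 2 ^ (μ - (d:ℝ)) * (C' * Nf * Ng)
          * ((1 + |m₁|) ^ (-μ) + (1 + |m - m₁|) ^ (-(μ - (d:ℝ)))))
        = 2 ^ (μ - (d:ℝ)) * (C' * Nf * Ng)
          * ((∫ x : ℝ, (1 + |x|) ^ (-μ)) + ∫ x : ℝ, (1 + |x|) ^ (-(μ - (d:ℝ)))) := by
      rw [integral_const_mul, integral_add hK₁ hcomp]
      congr 2
      exact integral_sub_left_eq_self (fun x : ℝ => (1 + |x|) ^ (-(μ - (d:ℝ)))) volume m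
    have step5 : 2 ^ (μ - (d:ℝ)) * (C' * Nf * Ng)
          * ((∫ x : ℝ, (1 + |x|) ^ (-μ)) + ∫ x : ℝ, (1 + |x|) ^ (-(μ - (d:ℝ))))
        ≤ 2 ^ (μ - (d:ℝ)) * C' * K * Nf * Ng := by
      have hS : (∫ x : ℝ, (1 + |x|) ^ (-μ)) + ∫ x : ℝ, (1 + |x|) ^ (-(μ - (d:ℝ))) ≤ K := by
        rw [hKdef]
        linarith
      have hb5 : 2 ^ (μ - (d:ℝ)) * (C' * Nf * Ng)
            * ((∫ x : ℝ, (1 + |x|) ^ (-μ)) + ∫ x : ℝ, (1 + |x|) ^ (-(μ - (d:ℝ))))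
          ≤ 2 ^ (μ - (d:ℝ)) * (C' * Nf * Ng) * K :=
        mul_le_mul_of_nonneg_left hS (mul_nonneg h2p hcnn0)
      refine hb5.trans (le_of_eq ?_)
      ring
    have efinal : Eweight β (μ - (d:ℝ)) (fun m' => ∫ m₁ : ℝ, F m' m₁) m
        = (1 + |m|) ^ (μ - (d:ℝ)) * Real.exp (β * |m|)
          * ‖∫ m₁ : ℝ, F m m₁‖ := rfl
    rw [efinal]
    exact ((((step1.trans (le_of_eq step2)).trans step3).trans (le_of_eq step4)).trans step5)
  have hbdd : BddAbove (Set.range (Eweight β (μ - (d:ℝ)) (fun m => ∫ m₁ : ℝ, F m m₁))) := by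
    refine ⟨2 ^ (μ - (d:ℝ)) * C' * K * Nf * Ng, ?_⟩
    rintro x ⟨m, rfl⟩
    exact est m
  exact ⟨⟨hcont, hbdd⟩, ciSup_le est⟩
end
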